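/- Let A ∈ ℝ^{n×n}, B ∈ ℝⁿ, Q symmetric positive definite, μ > 0, N ≥ 1 and ε > 0. Suppose P is a symmetric positive definite n×n matrix satisfying the Riccati equation P = AᵀPA − AᵀPB(BᵀPB + r)⁻¹BᵀPA + Q with r = Nμ²/(4ε). Define J(U,x) = x_NᵀPx_N + Σ_{i=0}^{N−1} x_iᵀQx_i + μΣ_{i=0}^{N−1}|u_i| (with x₀ = x, x_{i+1} = Ax_i + Bu_i), V(x) = inf_{U∈ℝ^N} J(U,x), and fix a map U*: ℝⁿ → ℝ^N such that for every x, J(U*(x), x) ≤ J(U, x) for all U ∈ ℝ^N. Writing U*(x) = (u₀(x),…,u_{N−1}(x)), define f^i(x) = A^i x + Σ_{l=0}^{i−1} A^{i−1−l}B u_l(x) for i = 1,…,N. Then for every x ∈ ℝⁿ and every i ∈ {1,…,N}: V(f^i(x)) − V(x) ≤ −λ_min(Q)‖x‖₂² + ε. -/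

import Mathlib

open Matrix

/-- Predicted state sequence of the plant `x(i+1) = A x(i) + u(i) • B` started at `x`. -/
noncomputable def stateSeq {n : ℕ} (A : Matrix (Fin n) (Fin n) ℝ) (B : Fin n → ℝ)
    (x : Fin n → ℝ) (u : ℕ → ℝ) : ℕ → Fin n → ℝ
  | 0 => x
  | i + 1 => A.mulVec (stateSeq A B x u i) + u i • B

/-- The finite-horizon `ℓ¹/ℓ²` cost
`J(U,x) = x_NᵀPx_N + Σ_{i<N} x_iᵀQx_i + μ Σ_{i<N} |u_i|`,
where `x_0 = x` and `x_{i+1} = A x_i + B u_i`. -/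
noncomputable def costJ {n N : ℕ} (A : Matrix (Fin n) (Fin n) ℝ) (B : Fin n → ℝ)
    (P Q : Matrix (Fin n) (Fin n) ℝ) (μ : ℝ) (U : Fin N → ℝ) (x : Fin n → ℝ) : ℝ :=
  let u : ℕ → ℝ := fun i => if h : i < N then U ⟨i, h⟩ else 0
  stateSeq A B x u N ⬝ᵥ P.mulVec (stateSeq A B x u N)
    + ∑ i : Fin N, stateSeq A B x u i ⬝ᵥ Q.mulVec (stateSeq A B x u i)
    + μ * ∑ i : Fin N, |U i|

/-- The state reached after `i` steps of open-loop application of the packet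
`Ustar x` to the plant: `f^i(x) = A^i x + Σ_{l<i} A^{i−1−l} B u_l(x)`. -/
noncomputable def fIter {n N : ℕ} (A : Matrix (Fin n) (Fin n) ℝ) (B : Fin n → ℝ)
    (Ustar : (Fin n → ℝ) → Fin N → ℝ) (i : ℕ) (x : Fin n → ℝ) : Fin n → ℝ :=
  (A ^ i).mulVec x +
    ∑ l ∈ Finset.range i,
      (if h : l < N then Ustar x ⟨l, h⟩ else 0) • (A ^ (i - 1 - l)).mulVec B


/-! ### Auxiliary lemmas -/

lemma olb_stateSeq_succ {n : ℕ} (A : Matrix (Fin n) (Fin n) ℝ) (B : Fin n → ℝ)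
    (x : Fin n → ℝ) (u : ℕ → ℝ) (i : ℕ) :
    stateSeq A B x u (i + 1) = A.mulVec (stateSeq A B x u i) + u i • B := rfl

lemma olb_mulVec_sum {n : ℕ} (A : Matrix (Fin n) (Fin n) ℝ) {ι : Type*} (s : Finset ι)
    (f : ι → Fin n → ℝ) : A *ᵥ (∑ l ∈ s, f l) = ∑ l ∈ s, A *ᵥ f l := by
  ext i
  simp only [mulVec, dotProduct, Finset.sum_apply, Finset.mul_sum]
  exact Finset.sum_comm

lemma olb_stateSeq_closed {n : ℕ} (A : Matrix (Fin n) (Fin n) ℝ) (B : Fin n → ℝ)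
    (x : Fin n → ℝ) (u : ℕ → ℝ) (i : ℕ) :
    stateSeq A B x u i = (A ^ i).mulVec x
      + ∑ l ∈ Finset.range i, u l • (A ^ (i - 1 - l)).mulVec B := by
  induction i with
  | zero => simp [stateSeq]
  | succ i ih =>
    rw [stateSeq, ih, Finset.sum_range_succ]
    have h0 : i + 1 - 1 - i = 0 := by omega
    rw [h0, pow_zero, one_mulVec, mulVec_add, mulVec_mulVec, ← pow_succ', olb_mulVec_sum]
    have h2 : ∀ l ∈ Finset.range i, A *ᵥ (u l • (A ^ (i - 1 - l)) *ᵥ B)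
        = u l • (A ^ (i + 1 - 1 - l)) *ᵥ B := by
      intro l hl
      rw [Finset.mem_range] at hl
      have he : i - 1 - l + 1 = i + 1 - 1 - l := by omega
      rw [mulVec_smul, mulVec_mulVec, ← pow_succ', he]
    rw [Finset.sum_congr rfl h2]
    abel

lemma olb_stateSeq_congr {n : ℕ} (A : Matrix (Fin n) (Fin n) ℝ) (B : Fin n → ℝ)
    (x : Fin n → ℝ) (u u' : ℕ → ℝ) (j : ℕ) (h : ∀ l < j, u l = u' l) :
    stateSeq A B x u j = stateSeq A B x u' j := by
  induction j with
  | zero => rfl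
  | succ j ih =>
    rw [stateSeq, stateSeq, ih fun l hl => h l (by omega), h j (by omega)]

lemma olb_stateSeq_shift {n : ℕ} (A : Matrix (Fin n) (Fin n) ℝ) (B : Fin n → ℝ)
    (x : Fin n → ℝ) (u : ℕ → ℝ) (i j : ℕ) :
    stateSeq A B (stateSeq A B x u i) (fun l => u (i + l)) j = stateSeq A B x u (i + j) := by
  induction j with
  | zero => rfl
  | succ j ih =>
    rw [stateSeq, ih]
    have h : i + (j + 1) = (i + j) + 1 := by omega
    rw [h, stateSeq]

lemma olb_rayleigh_min {n : ℕ} {Q : Matrix (Fin n) (Fin n) ℝ} (hQ : Q.PosDef) (x : Fin n → ℝ) :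
    (⨅ j, hQ.1.eigenvalues j) * (x ⬝ᵥ x) ≤ x ⬝ᵥ Q.mulVec x := by
  classical
  set hH := hQ.1 with hHdef
  set U : Matrix (Fin n) (Fin n) ℝ := (hH.eigenvectorUnitary : Matrix (Fin n) (Fin n) ℝ) with hU
  have hUU : U * star U = 1 := mem_unitaryGroup_iff.mp hH.eigenvectorUnitary.2
  set c : Fin n → ℝ := (star U).mulVec x with hc
  have hcv : c = x ᵥ* U := by
    rw [hc, star_eq_conjTranspose, conjTranspose_eq_transpose_of_trivial, mulVec_transpose]
  have hQx : x ⬝ᵥ Q.mulVec x = ∑ j, hH.eigenvalues j * (c j * c j) := by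
    conv_lhs => rw [hH.spectral_theorem, Unitary.conjStarAlgAut_apply]
    rw [← mulVec_mulVec, ← mulVec_mulVec, dotProduct_mulVec, ← hcv, ← hc]
    simp only [mulVec_diagonal, dotProduct]
    exact Finset.sum_congr rfl fun j _ => by simp [RCLike.ofReal_real_eq_id]; ring
  have hxx : x ⬝ᵥ x = ∑ j, c j * c j := by
    have h2 : c ⬝ᵥ c = x ⬝ᵥ x := by
      nth_rewrite 2 [hc]
      rw [dotProduct_mulVec, hcv, vecMul_vecMul, hUU, vecMul_one]
    rw [← h2]; rfl
  rw [hQx, hxx, Finset.mul_sum]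
  apply Finset.sum_le_sum
  intro j _
  have h1 : (⨅ j, hH.eigenvalues j) ≤ hH.eigenvalues j :=
    ciInf_le (Set.Finite.bddBelow (Set.finite_range _)) j
  nlinarith [mul_self_nonneg (c j)]

lemma olb_vecMulVec_quad {n : ℕ} (a b z : Fin n → ℝ) :
    z ⬝ᵥ (vecMulVec a b).mulVec z = (z ⬝ᵥ a) * (b ⬝ᵥ z) := by
  have h : (vecMulVec a b).mulVec z = (b ⬝ᵥ z) • a := by
    ext i
    simp only [mulVec, vecMulVec_apply, dotProduct, Pi.smul_apply, smul_eq_mul, Finset.sum_mul]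
    exact Finset.sum_congr rfl fun j _ => by ring
  rw [h, dotProduct_smul, smul_eq_mul]
  ring

lemma olb_symm_quad {n : ℕ} (P : Matrix (Fin n) (Fin n) ℝ) (hPsym : Pᵀ = P) (v w : Fin n → ℝ) :
    v ⬝ᵥ P.mulVec w = w ⬝ᵥ P.mulVec v := by
  rw [dotProduct_mulVec]
  conv_lhs => rw [← hPsym]
  rw [vecMul_transpose, dotProduct_comm]

lemma olb_key_step {n : ℕ} (A P Q : Matrix (Fin n) (Fin n) ℝ) (B z : Fin n → ℝ)
    (hPsym : Pᵀ = P) (r : ℝ) (hr : 0 < r) (hs : 0 < B ⬝ᵥ P.mulVec B + r)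
    (μ : ℝ) (hμ : 0 ≤ μ)
    (hric : P = Aᵀ * P * A
      - (B ⬝ᵥ P.mulVec B + r)⁻¹ • vecMulVec ((Aᵀ * P).mulVec B) (B ᵥ* (P * A)) + Q) :
    (A.mulVec z + (-((B ⬝ᵥ P.mulVec B + r)⁻¹ * ((B ᵥ* (P * A)) ⬝ᵥ z))) • B) ⬝ᵥ
        P.mulVec (A.mulVec z + (-((B ⬝ᵥ P.mulVec B + r)⁻¹ * ((B ᵥ* (P * A)) ⬝ᵥ z))) • B)
      + z ⬝ᵥ Q.mulVec z
      + μ * |(-((B ⬝ᵥ P.mulVec B + r)⁻¹ * ((B ᵥ* (P * A)) ⬝ᵥ z)))|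
    ≤ z ⬝ᵥ P.mulVec z + μ ^ 2 / (4 * r) := by
  set t : ℝ := B ⬝ᵥ P.mulVec B with ht
  set s : ℝ := t + r with hsdef
  set w : ℝ := (B ᵥ* (P * A)) ⬝ᵥ z with hw
  set u : ℝ := -(s⁻¹ * w) with hu
  set a : Fin n → ℝ := A.mulVec z with ha
  have hsne : s ≠ 0 := ne_of_gt hs
  have hwa : a ⬝ᵥ P.mulVec B = w := by
    rw [hw, ← dotProduct_mulVec, ← mulVec_mulVec, ← ha, olb_symm_quad P hPsym a B]
  have hwa' : B ⬝ᵥ P.mulVec a = w := by rw [olb_symm_quad P hPsym B a, hwa]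
  have h1 : z ⬝ᵥ P.mulVec z = a ⬝ᵥ P.mulVec a - s⁻¹ * (w * w) + z ⬝ᵥ Q.mulVec z := by
    conv_lhs => rw [hric]
    rw [add_mulVec, sub_mulVec, smul_mulVec, dotProduct_add, dotProduct_sub,
      dotProduct_smul]
    have e1 : z ⬝ᵥ (Aᵀ * P * A).mulVec z = a ⬝ᵥ P.mulVec a := by
      rw [← mulVec_mulVec, ← mulVec_mulVec, dotProduct_mulVec z Aᵀ, vecMul_transpose, ← ha]
    have e2 : z ⬝ᵥ (vecMulVec ((Aᵀ * P).mulVec B) (B ᵥ* (P * A))).mulVec z = w * w := by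
      rw [olb_vecMulVec_quad, ← hw]
      have : z ⬝ᵥ (Aᵀ * P).mulVec B = w := by
        rw [← mulVec_mulVec, dotProduct_mulVec z Aᵀ, vecMul_transpose, ← ha, hwa]
      rw [this]
    rw [e1, e2, smul_eq_mul]
  have h2 : (a + u • B) ⬝ᵥ P.mulVec (a + u • B)
      = a ⬝ᵥ P.mulVec a + u * w + u * w + u * u * t := by
    rw [mulVec_add, mulVec_smul, dotProduct_add, add_dotProduct, add_dotProduct,
      dotProduct_smul, smul_dotProduct, smul_dotProduct, dotProduct_smul,
      smul_eq_mul, smul_eq_mul, smul_eq_mul, smul_eq_mul, hwa, hwa', ht]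
    ring
  rw [h2, h1]
  have hcombine : u * w + u * w + u * u * t + s⁻¹ * (w * w) = -(r * (u * u)) := by
    rw [hu, hsdef]
    field_simp
    ring
  have habs : |u| = s⁻¹ * |w| := by
    rw [hu, abs_neg, abs_mul, abs_of_pos (inv_pos.mpr hs)]
  clear_value t s w u a
  have habs2 : |u| * |u| = u * u := abs_mul_abs_self u
  have hword : μ * |u| - r * (u * u) ≤ μ ^ 2 / (4 * r) := by
    rw [le_div_iff₀ (by linarith : (0:ℝ) < 4 * r), ← habs2]
    nlinarith [sq_nonneg (2 * r * |u| - μ), abs_nonneg u]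
  linarith [hword, hcombine]

/-- **Open-loop bound.** If `P` solves the Riccati equation with `r = Nμ²/(4ε)`, then
for every `x` and every `i ∈ {1,…,N}`,
`V(f^i(x)) − V(x) ≤ −λ_min(Q)‖x‖₂² + ε`. -/
theorem open_loop_bound {n N : ℕ} (hN : 1 ≤ N)
    (A : Matrix (Fin n) (Fin n) ℝ) (B : Fin n → ℝ)
    (Q : Matrix (Fin n) (Fin n) ℝ) (hQ : Q.PosDef)
    (μ ε : ℝ) (hμ : 0 < μ) (hε : 0 < ε)
    (P : Matrix (Fin n) (Fin n) ℝ) (hP : P.PosDef)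
    (hric : P = Aᵀ * P * A
      - (B ⬝ᵥ P.mulVec B + N * μ ^ 2 / (4 * ε))⁻¹ •
          vecMulVec ((Aᵀ * P).mulVec B) (B ᵥ* (P * A)) + Q)
    (Ustar : (Fin n → ℝ) → Fin N → ℝ)
    (hUstar : ∀ (x : Fin n → ℝ) (U : Fin N → ℝ),
      costJ A B P Q μ (Ustar x) x ≤ costJ A B P Q μ U x) :
    ∀ (x : Fin n → ℝ) (i : ℕ), 1 ≤ i → i ≤ N →
      (⨅ U : Fin N → ℝ, costJ A B P Q μ U (fIter A B Ustar i x))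
          - (⨅ U : Fin N → ℝ, costJ A B P Q μ U x)
        ≤ -(⨅ j, hQ.1.eigenvalues j) * (x ⬝ᵥ x) + ε := by
  classical
  intro x i hi1 hiN
  have hNR : (0:ℝ) < N := by exact_mod_cast hN
  set r : ℝ := N * μ ^ 2 / (4 * ε) with hrdef
  have hr : 0 < r := by
    apply div_pos (mul_pos hNR (pow_pos hμ 2)) (by linarith)
  have hBPB : 0 ≤ B ⬝ᵥ P.mulVec B := by
    have := hP.posSemidef.dotProduct_mulVec_nonneg B
    simpa using this
  have hs : 0 < B ⬝ᵥ P.mulVec B + r := by linarith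
  have hPsym : Pᵀ = P := by
    rw [← conjTranspose_eq_transpose_of_trivial]; exact hP.1
  have hεN : μ ^ 2 / (4 * r) = ε / N := by
    rw [hrdef]
    field_simp
  -- trajectory data
  set u : ℕ → ℝ := fun l => if h : l < N then Ustar x ⟨l, h⟩ else 0 with hudef
  set K : (Fin n → ℝ) → ℝ :=
    fun zz => -((B ⬝ᵥ P.mulVec B + r)⁻¹ * ((B ᵥ* (P * A)) ⬝ᵥ zz)) with hKdef
  set g : (Fin n → ℝ) → Fin n → ℝ := fun zz => A.mulVec zz + K zz • B with hgdef
  set z : ℕ → Fin n → ℝ :=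
    fun m => if m ≤ N then stateSeq A B x u m else g^[m - N] (stateSeq A B x u N) with hzdef
  set v : ℕ → ℝ := fun m => if m < N then u m else K (z m) with hvdef
  have hzle : ∀ m, m ≤ N → z m = stateSeq A B x u m := by
    intro m hm; rw [hzdef]; simp [hm]
  have hziter : ∀ m, N ≤ m → z m = g^[m - N] (stateSeq A B x u N) := by
    intro m hm
    rcases eq_or_lt_of_le hm with h | h
    · rw [← h]; simp [hzdef]
    · rw [hzdef]; simp [Nat.not_le.mpr h]
  have hzstep : ∀ m, N ≤ m → z (m + 1) = g (z m) := by
    intro m hm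
    rw [hziter m hm, hziter (m + 1) (by omega)]
    have : m + 1 - N = (m - N) + 1 := by omega
    rw [this, Function.iterate_succ_apply']
  have hzv : ∀ m, z m = stateSeq A B x v m := by
    intro m
    induction m with
    | zero => rw [hzle 0 (by omega)]; rfl
    | succ m ih =>
      by_cases hm : m + 1 ≤ N
      · rw [hzle (m + 1) hm]
        exact olb_stateSeq_congr A B x u v (m + 1)
          (fun l hl => by simp [hvdef, show l < N by omega])
      · have hvm : v m = K (z m) := by simp [hvdef, show ¬ (m < N) by omega]
        rw [hzstep m (by omega), olb_stateSeq_succ, ← ih, hvm]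
  -- per-step decrease bound during the feedback extension
  have hstep : ∀ m, N ≤ m →
      z (m + 1) ⬝ᵥ P.mulVec (z (m + 1)) + (z m ⬝ᵥ Q.mulVec (z m) + μ * |v m|)
        ≤ z m ⬝ᵥ P.mulVec (z m) + ε / N := by
    intro m hm
    have hvm : v m = K (z m) := by simp [hvdef, show ¬ (m < N) by omega]
    have hgz : z (m + 1) = A.mulVec (z m) + K (z m) • B := hzstep m hm
    rw [hgz, hvm, hKdef]
    have := olb_key_step A P Q B (z m) hPsym r hr hs μ hμ.le hric
    rw [hεN] at this
    linarith [this]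
  -- running cost is nonnegative
  have hcn : ∀ m, 0 ≤ z m ⬝ᵥ Q.mulVec (z m) + μ * |v m| := by
    intro m
    have h1 : 0 ≤ z m ⬝ᵥ Q.mulVec (z m) := by
      have := hQ.posSemidef.dotProduct_mulVec_nonneg (z m); simpa using this
    have h2 : 0 ≤ μ * |v m| := mul_nonneg hμ.le (abs_nonneg _)
    linarith
  -- telescoping over the feedback extension
  have htel : ∀ k : ℕ,
      z (N + k) ⬝ᵥ P.mulVec (z (N + k))
        + ∑ m ∈ Finset.Ico N (N + k), (z m ⬝ᵥ Q.mulVec (z m) + μ * |v m|)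
      ≤ z N ⬝ᵥ P.mulVec (z N) + k * (ε / N) := by
    intro k
    induction k with
    | zero => simp
    | succ k ih =>
      have hNk : N ≤ N + k := by omega
      have h1 : N + (k + 1) = (N + k) + 1 := by omega
      rw [h1, Finset.sum_Ico_succ_top hNk]
      have h2 := hstep (N + k) hNk
      push_cast
      push_cast at ih
      linarith
  set c : ℕ → ℝ := fun m => z m ⬝ᵥ Q.mulVec (z m) + μ * |v m| with hcdef
  -- cost of the optimal packet at x
  have hux : ∀ j : Fin N, u (j : ℕ) = Ustar x j := fun j => by
    simp [hudef, j.isLt]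
  have hvu : ∀ m, m < N → v m = u m := fun m hm => by simp [hvdef, hm]
  have hcostx : costJ A B P Q μ (Ustar x) x
      = z N ⬝ᵥ P.mulVec (z N) + ∑ m ∈ Finset.range N, c m := by
    have e0 : costJ A B P Q μ (Ustar x) x
        = stateSeq A B x u N ⬝ᵥ P.mulVec (stateSeq A B x u N)
          + ∑ j : Fin N, stateSeq A B x u (j : ℕ) ⬝ᵥ Q.mulVec (stateSeq A B x u (j : ℕ))
          + μ * ∑ j : Fin N, |Ustar x j| := rfl
    rw [e0, ← hzle N le_rfl]
    have e1 : ∑ j : Fin N, stateSeq A B x u (j : ℕ) ⬝ᵥ Q.mulVec (stateSeq A B x u (j : ℕ))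
        = ∑ m ∈ Finset.range N, z m ⬝ᵥ Q.mulVec (z m) := by
      rw [Fin.sum_univ_eq_sum_range (fun m => stateSeq A B x u m ⬝ᵥ Q.mulVec (stateSeq A B x u m)) N]
      exact Finset.sum_congr rfl fun m hm => by
        rw [← hzle m (le_of_lt (Finset.mem_range.mp hm))]
    have e2 : ∑ j : Fin N, |Ustar x j| = ∑ m ∈ Finset.range N, |v m| := by
      rw [← Fin.sum_univ_eq_sum_range (fun m => |v m|) N]
      exact Finset.sum_congr rfl fun j _ => by rw [hvu (j : ℕ) j.isLt, hux j]
    have e3 : ∑ m ∈ Finset.range N, c m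
        = ∑ m ∈ Finset.range N, z m ⬝ᵥ Q.mulVec (z m) + μ * ∑ m ∈ Finset.range N, |v m| := by
      simp only [hcdef]
      rw [Finset.sum_add_distrib, ← Finset.mul_sum]
    rw [e1, e2, e3]
    ring
  -- the candidate packet for the shifted state
  set U' : Fin N → ℝ := fun j => v (i + (j : ℕ)) with hU'def
  have hy : fIter A B Ustar i x = z i := by
    have h1 : fIter A B Ustar i x = stateSeq A B x u i := by
      rw [olb_stateSeq_closed]
      rfl
    rw [h1, ← hzle i hiN]
  have hstate' : ∀ j, j ≤ N →
      stateSeq A B (z i) (fun l => if h : l < N then U' ⟨l, h⟩ else 0) j = z (i + j) := by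
    intro j hj
    have e1 : stateSeq A B (z i) (fun l => if h : l < N then U' ⟨l, h⟩ else 0) j
        = stateSeq A B (z i) (fun l => v (i + l)) j :=
      olb_stateSeq_congr A B (z i) _ _ j
        (fun l hl => by simp [hU'def, show l < N by omega])
    rw [e1, hzv i, olb_stateSeq_shift, ← hzv (i + j)]
  have hcosty : costJ A B P Q μ U' (z i)
      = z (i + N) ⬝ᵥ P.mulVec (z (i + N)) + ∑ m ∈ Finset.Ico i (i + N), c m := by
    have e0 : costJ A B P Q μ U' (z i)
        = stateSeq A B (z i) (fun l => if h : l < N then U' ⟨l, h⟩ else 0) N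
            ⬝ᵥ P.mulVec (stateSeq A B (z i) (fun l => if h : l < N then U' ⟨l, h⟩ else 0) N)
          + ∑ j : Fin N, stateSeq A B (z i) (fun l => if h : l < N then U' ⟨l, h⟩ else 0) (j : ℕ)
              ⬝ᵥ Q.mulVec (stateSeq A B (z i) (fun l => if h : l < N then U' ⟨l, h⟩ else 0) (j : ℕ))
          + μ * ∑ j : Fin N, |U' j| := rfl
    rw [e0, hstate' N le_rfl]
    have e1 : ∑ j : Fin N, stateSeq A B (z i) (fun l => if h : l < N then U' ⟨l, h⟩ else 0) (j : ℕ)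
          ⬝ᵥ Q.mulVec (stateSeq A B (z i) (fun l => if h : l < N then U' ⟨l, h⟩ else 0) (j : ℕ))
        = ∑ m ∈ Finset.range N, z (i + m) ⬝ᵥ Q.mulVec (z (i + m)) := by
      rw [Fin.sum_univ_eq_sum_range (fun m =>
        stateSeq A B (z i) (fun l => if h : l < N then U' ⟨l, h⟩ else 0) m
          ⬝ᵥ Q.mulVec (stateSeq A B (z i) (fun l => if h : l < N then U' ⟨l, h⟩ else 0) m)) N]
      exact Finset.sum_congr rfl fun m hm => by
        rw [hstate' m (le_of_lt (Finset.mem_range.mp hm))]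
    have e2 : ∑ j : Fin N, |U' j| = ∑ m ∈ Finset.range N, |v (i + m)| := by
      rw [← Fin.sum_univ_eq_sum_range (fun m => |v (i + m)|) N]
    have e4 : ∑ m ∈ Finset.Ico i (i + N), c m
        = ∑ m ∈ Finset.range N, z (i + m) ⬝ᵥ Q.mulVec (z (i + m))
          + μ * ∑ m ∈ Finset.range N, |v (i + m)| := by
      rw [Finset.sum_Ico_eq_sum_range]
      simp only [Nat.add_sub_cancel_left, hcdef]
      rw [Finset.sum_add_distrib, ← Finset.mul_sum]
    rw [e1, e2, e4]
    ring
  -- splitting the sums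
  have hsplit1 : ∑ m ∈ Finset.Ico i (i + N), c m
      = ∑ m ∈ Finset.Ico i N, c m + ∑ m ∈ Finset.Ico N (i + N), c m :=
    (Finset.sum_Ico_consecutive c hiN (by omega)).symm
  have hsplit2 : ∑ m ∈ Finset.range N, c m
      = ∑ m ∈ Finset.Ico 0 i, c m + ∑ m ∈ Finset.Ico i N, c m := by
    rw [Finset.sum_Ico_consecutive c (Nat.zero_le i) hiN, Finset.range_eq_Ico]
  have htel' := htel i
  rw [show N + i = i + N by omega] at htel'
  have hc0 : c 0 ≤ ∑ m ∈ Finset.Ico 0 i, c m :=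
    Finset.single_le_sum (fun m _ => hcn m) (by simp; omega)
  have hz0 : z 0 = x := by rw [hzle 0 (Nat.zero_le N)]; rfl
  have hray := olb_rayleigh_min hQ x
  have hc0' : (⨅ j, hQ.1.eigenvalues j) * (x ⬝ᵥ x) ≤ c 0 := by
    have : c 0 = x ⬝ᵥ Q.mulVec x + μ * |v 0| := by rw [hcdef]; simp only; rw [hz0]
    rw [this]
    have := mul_nonneg hμ.le (abs_nonneg (v 0))
    linarith
  have hiε : (i : ℝ) * (ε / N) ≤ ε := by
    have hle : (i : ℝ) ≤ N := by exact_mod_cast hiN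
    have h1 : (i : ℝ) * (ε / N) ≤ (N : ℝ) * (ε / N) :=
      mul_le_mul_of_nonneg_right hle (le_of_lt (div_pos hε hNR))
    have h2 : (N : ℝ) * (ε / N) = ε := by field_simp
    linarith
  -- the value function facts
  have hbx : BddBelow (Set.range fun U => costJ A B P Q μ U x) :=
    ⟨costJ A B P Q μ (Ustar x) x, by rintro val ⟨U, rfl⟩; exact hUstar x U⟩
  have hVx : (⨅ U, costJ A B P Q μ U x) = costJ A B P Q μ (Ustar x) x :=
    le_antisymm (ciInf_le hbx (Ustar x)) (le_ciInf fun U => hUstar x U)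
  have hby : BddBelow (Set.range fun U => costJ A B P Q μ U (z i)) :=
    ⟨costJ A B P Q μ (Ustar (z i)) (z i), by rintro val ⟨U, rfl⟩; exact hUstar (z i) U⟩
  have hVy : (⨅ U, costJ A B P Q μ U (z i)) ≤ costJ A B P Q μ U' (z i) := ciInf_le hby U'
  rw [hy, hVx]
  linarith [hVy, hcosty, hsplit1, hsplit2, htel', hc0, hc0', hiε, hcostx,
    Finset.sum_nonneg (fun m (_ : m ∈ Finset.Ico i N) => hcn m)]
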